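/- If $A \in \mathbb{C}^{m\times m}$ is diagonalizable with eigenpairs $(\lambda_i, w_i)$, $i=1,\ldots,m$, and each matrix $T_n(\lambda_i) = \sum_{j=0}^{\ell} \lambda_i^j T_n^{(j)}$ is diagonalizable with eigenpairs $(\mu_{k,i}, v_{k,i})$, $k = 1,\ldots,n+1$, then the $(n+1)m$ vectors $v_{k,i} \otimes w_i$ form a basis of eigenvectors of $T_n(A) = \sum_{j=0}^{\ell} T_n^{(j)} \otimes A^j$ with eigenvalues $\mu_{k,i}$; in particular $T_n(A)$ is diagonalizable. -/
import Mathlib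
open Matrix Kronecker

lemma kron_mulVec' {p q : Type*} [Fintype p] [Fintype q]
    (T : Matrix p p ℂ) (B : Matrix q q ℂ) (x : p → ℂ) (y : q → ℂ) :
    (T ⊗ₖ B).mulVec (fun r : p × q => x r.1 * y r.2)
      = fun r : p × q => T.mulVec x r.1 * B.mulVec y r.2 := by
  funext r
  simp only [Matrix.mulVec, dotProduct, kroneckerMap_apply]
  rw [Fintype.sum_prod_type, Finset.sum_mul_sum]
  congr 1; funext a; congr 1; funext b; ring

lemma sum_mulVec' {p : Type*} [Fintype p] (s : Finset ℕ) (M : ℕ → Matrix p p ℂ)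
    (x : p → ℂ) : (∑ j ∈ s, M j).mulVec x = ∑ j ∈ s, (M j).mulVec x := by
  funext r
  simp only [Matrix.mulVec, dotProduct, Finset.sum_apply, Finset.sum_mul, Matrix.sum_apply]
  rw [Finset.sum_comm]

theorem cf_matrix_eigendecomposition
    (m n ℓ : ℕ) (A : Matrix (Fin m) (Fin m) ℂ)
    (Tj : ℕ → Matrix (Fin (n + 1)) (Fin (n + 1)) ℂ)
    (lam : Fin m → ℂ) (w : Fin m → (Fin m → ℂ))
    (hAw : ∀ i, A.mulVec (w i) = lam i • w i)
    (hwli : LinearIndependent ℂ w)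
    (hwsp : Submodule.span ℂ (Set.range w) = ⊤)
    (mu : Fin (n + 1) → Fin m → ℂ)
    (v : Fin (n + 1) → Fin m → (Fin (n + 1) → ℂ))
    (hv : ∀ k i, (∑ j ∈ Finset.range (ℓ + 1), lam i ^ j • Tj j).mulVec (v k i)
      = mu k i • v k i)
    (hvli : ∀ i, LinearIndependent ℂ (fun k => v k i))
    (hvsp : ∀ i, Submodule.span ℂ (Set.range fun k => v k i) = ⊤) :
    (∀ k i, (∑ j ∈ Finset.range (ℓ + 1), (Tj j) ⊗ₖ (A ^ j)).mulVec
        (fun p : Fin (n + 1) × Fin m => v k i p.1 * w i p.2)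
      = mu k i • (fun p : Fin (n + 1) × Fin m => v k i p.1 * w i p.2)) ∧
    LinearIndependent ℂ
      (fun ki : Fin (n + 1) × Fin m =>
        (fun p : Fin (n + 1) × Fin m => v ki.1 ki.2 p.1 * w ki.2 p.2)) ∧
    Submodule.span ℂ
      (Set.range fun ki : Fin (n + 1) × Fin m =>
        (fun p : Fin (n + 1) × Fin m => v ki.1 ki.2 p.1 * w ki.2 p.2)) = ⊤ := by
  have hApow : ∀ (j : ℕ) i, (A ^ j).mulVec (w i) = lam i ^ j • w i := by
    intro j i
    induction j with
    | zero => simp [Matrix.one_mulVec]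
    | succ j ih =>
      rw [pow_succ, ← Matrix.mulVec_mulVec, hAw i, Matrix.mulVec_smul, ih,
        smul_smul, pow_succ]
      ring_nf
  -- eigenvector property
  have hEig : ∀ k i, (∑ j ∈ Finset.range (ℓ + 1), (Tj j) ⊗ₖ (A ^ j)).mulVec
        (fun p : Fin (n + 1) × Fin m => v k i p.1 * w i p.2)
      = mu k i • (fun p : Fin (n + 1) × Fin m => v k i p.1 * w i p.2) := by
    intro k i
    rw [sum_mulVec']
    have hterm : ∀ j, ((Tj j) ⊗ₖ (A ^ j)).mulVec
        (fun p : Fin (n + 1) × Fin m => v k i p.1 * w i p.2)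
        = fun p : Fin (n + 1) × Fin m =>
            (lam i ^ j • (Tj j).mulVec (v k i)) p.1 * w i p.2 := by
      intro j
      rw [kron_mulVec', hApow]
      funext r
      simp [mul_comm, mul_assoc, mul_left_comm]
    have := hv k i
    rw [sum_mulVec'] at this
    funext r
    simp only [Finset.sum_apply, hterm, Pi.smul_apply, smul_eq_mul]
    have h2 : ∀ j, (lam i ^ j • Tj j).mulVec (v k i) = lam i ^ j • (Tj j).mulVec (v k i) := by
      intro j; rw [Matrix.smul_mulVec]
    calc ∑ j ∈ Finset.range (ℓ + 1), (lam i ^ j • (Tj j).mulVec (v k i)) r.1 * w i r.2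
        = (∑ j ∈ Finset.range (ℓ + 1), (lam i ^ j • Tj j).mulVec (v k i)) r.1 * w i r.2 := by
          rw [Finset.sum_apply, ← Finset.sum_mul]
          congr 1
          exact Finset.sum_congr rfl fun j _ => by rw [h2]
      _ = mu k i * (v k i r.1 * w i r.2) := by
          rw [this]; simp [mul_assoc]
  set F : Fin (n + 1) × Fin m → (Fin (n + 1) × Fin m → ℂ) :=
    fun ki => (fun p : Fin (n + 1) × Fin m => v ki.1 ki.2 p.1 * w ki.2 p.2) with hF
  set S := Submodule.span ℂ (Set.range F) with hS
  have key1 : ∀ (x : Fin (n + 1) → ℂ) (i : Fin m),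
      (fun r : Fin (n + 1) × Fin m => x r.1 * w i r.2) ∈ S := by
    intro x i
    have hx : x ∈ Submodule.span ℂ (Set.range fun k => v k i) := by
      rw [hvsp i]; trivial
    induction hx using Submodule.span_induction with
    | mem z hz =>
      obtain ⟨k, rfl⟩ := hz
      exact Submodule.subset_span ⟨(k, i), rfl⟩
    | zero =>
      have : (fun r : Fin (n + 1) × Fin m => (0 : Fin (n + 1) → ℂ) r.1 * w i r.2)
          = (0 : Fin (n + 1) × Fin m → ℂ) := by funext r; simp
      rw [this]; exact S.zero_mem
    | add a b _ _ ha hb =>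
      have : (fun r : Fin (n + 1) × Fin m => (a + b) r.1 * w i r.2)
          = (fun r : Fin (n + 1) × Fin m => a r.1 * w i r.2)
            + (fun r : Fin (n + 1) × Fin m => b r.1 * w i r.2) := by
        funext r; simp [add_mul]
      rw [this]; exact S.add_mem ha hb
    | smul c a _ ha =>
      have : (fun r : Fin (n + 1) × Fin m => (c • a) r.1 * w i r.2)
          = c • (fun r : Fin (n + 1) × Fin m => a r.1 * w i r.2) := by
        funext r; simp [mul_assoc]
      rw [this]; exact S.smul_mem c ha
  have key2 : ∀ (x : Fin (n + 1) → ℂ) (y : Fin m → ℂ),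
      (fun r : Fin (n + 1) × Fin m => x r.1 * y r.2) ∈ S := by
    intro x y
    have hy : y ∈ Submodule.span ℂ (Set.range w) := by rw [hwsp]; trivial
    induction hy using Submodule.span_induction with
    | mem z hz =>
      obtain ⟨i, rfl⟩ := hz
      exact key1 x i
    | zero =>
      have : (fun r : Fin (n + 1) × Fin m => x r.1 * (0 : Fin m → ℂ) r.2)
          = (0 : Fin (n + 1) × Fin m → ℂ) := by funext r; simp
      rw [this]; exact S.zero_mem
    | add a b _ _ ha hb =>
      have : (fun r : Fin (n + 1) × Fin m => x r.1 * (a + b) r.2)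
          = (fun r : Fin (n + 1) × Fin m => x r.1 * a r.2)
            + (fun r : Fin (n + 1) × Fin m => x r.1 * b r.2) := by
        funext r; simp [mul_add]
      rw [this]; exact S.add_mem ha hb
    | smul c a _ ha =>
      have : (fun r : Fin (n + 1) × Fin m => x r.1 * (c • a) r.2)
          = c • (fun r : Fin (n + 1) × Fin m => x r.1 * a r.2) := by
        funext r; simp; ring
      rw [this]; exact S.smul_mem c ha
  have hspan : S = ⊤ := by
    rw [eq_top_iff, ← (Pi.basisFun ℂ (Fin (n + 1) × Fin m)).span_eq,
      Submodule.span_le]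
    rintro _ ⟨p, rfl⟩
    have : (Pi.basisFun ℂ (Fin (n + 1) × Fin m)) p
        = (fun r : Fin (n + 1) × Fin m => (Pi.single p.1 1 : Fin (n+1) → ℂ) r.1 * (Pi.single p.2 1 : Fin m → ℂ) r.2) := by
      rw [Pi.basisFun_apply]
      funext r
      by_cases h1 : r.1 = p.1 <;> by_cases h2 : r.2 = p.2 <;>
        simp [Pi.single_apply, Prod.ext_iff, h1, h2]
    rw [this]
    exact key2 _ _
  have hcard : Fintype.card (Fin (n + 1) × Fin m)
      = Module.finrank ℂ (Fin (n + 1) × Fin m → ℂ) := by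
    simp [Module.finrank_pi]
  refine ⟨hEig, ?_, hspan⟩
  exact linearIndependent_of_top_le_span_of_card_eq_finrank hspan.ge hcard
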